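/- arXiv:0909.3185 — 3 statements merged into one kernel-verified Lean document; each statement's English description precedes it below -/
import Mathlib

section
/- Let X and Y be ℤ₂ℤ₄-additive codes in ℤ₂^α × ℤ₄^β with minimum Lee distances d_X and d_Y. Then the Plotkin construction code C = {(u, u+v) : u ∈ X, v ∈ Y} has minimum Lee distance exactly min{2d_X, d_Y}, provided X and Y are nonzero. -/
open Finset

/-- The Gray map `φ : ℤ₄ → ℤ₂²`. -/
def grayMap (x : ZMod 4) : ZMod 2 × ZMod 2 :=
  if x = 0 then (0, 0) else if x = 1 then (0, 1) else if x = 2 then (1, 1) else (1, 0)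

/-- Lee weight on `ℤ₄`: `wL(0)=0, wL(1)=1, wL(2)=2, wL(3)=1`. -/
def leeWt4 (x : ZMod 4) : ℕ := min x.val (4 - x.val)

/-- Hamming distance on `ℤ₂²`. -/
def hamDist2 (x y : ZMod 2 × ZMod 2) : ℕ :=
  (if x.1 = y.1 then 0 else 1) + (if x.2 = y.2 then 0 else 1)

/-- The ambient space `ℤ₂^a × ℤ₄^b`. -/
abbrev Vec (a b : ℕ) := (Fin a → ZMod 2) × (Fin b → ZMod 4)

/-- Hamming weight of a binary vector. -/
def wtH {n : ℕ} (f : Fin n → ZMod 2) : ℕ := (univ.filter fun i => f i ≠ 0).card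

/-- Lee weight on `ℤ₂^a × ℤ₄^b`. -/
def leeWt {a b : ℕ} (w : Vec a b) : ℕ := wtH w.1 + ∑ j, leeWt4 (w.2 j)

/-- Lee distance on `ℤ₂^a × ℤ₄^b`. -/
def leeDist {a b : ℕ} (x y : Vec a b) : ℕ := leeWt (x - y)

/-- Minimum Lee distance (= minimum Lee weight of a nonzero element) of a set. -/
noncomputable def minLee {a b : ℕ} (S : Set (Vec a b)) : ℕ := sInf (leeWt '' (S \ {0}))

/-- Minimum Hamming distance of a (not necessarily linear) binary code. -/
noncomputable def minHam {n : ℕ} (S : Set (Fin n → ZMod 2)) : ℕ :=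
  sInf {d | ∃ x ∈ S, ∃ y ∈ S, x ≠ y ∧ hammingDist x y = d}

/-- The extended Gray map `Φ : ℤ₂^a × ℤ₄^b → ℤ₂^(a+2b)`. -/
def Phi {a b : ℕ} (x : Vec a b) : Fin (a + 2 * b) → ZMod 2 :=
  fun i =>
    if h : (i : ℕ) < a then x.1 ⟨i, h⟩
    else
      have hb : ((i : ℕ) - a) / 2 < b := by have := i.isLt; omega
      if ((i : ℕ) - a) % 2 = 0 then (grayMap (x.2 ⟨((i : ℕ) - a) / 2, hb⟩)).1
      else (grayMap (x.2 ⟨((i : ℕ) - a) / 2, hb⟩)).2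

/-- The Plotkin vector `(u , u + v)` in `ℤ₂^(2a) × ℤ₄^(2b)`. -/
def plVec {a b : ℕ} (u v : Vec a b) : Vec (a + a) (b + b) :=
  (Fin.append u.1 (u.1 + v.1), Fin.append u.2 (u.2 + v.2))

/-- The Plotkin construction `{(u, u+v) : u ∈ X, v ∈ Y}`. -/
def plotkinSet {a b : ℕ} (X Y : Set (Vec a b)) : Set (Vec (a + a) (b + b)) :=
  {w | ∃ u ∈ X, ∃ v ∈ Y, w = plVec u v}


section Aux

lemma leeWt4_add_le (x y : ZMod 4) : leeWt4 (x + y) ≤ leeWt4 x + leeWt4 y := by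
  revert x y; decide

lemma leeWt4_neg (x : ZMod 4) : leeWt4 (-x) = leeWt4 x := by revert x; decide

lemma wtH_neg {n : ℕ} (f : Fin n → ZMod 2) : wtH (-f) = wtH f := by
  unfold wtH; congr 1; ext i; simp [neg_eq_zero]

lemma wtH_add_le {n : ℕ} (f g : Fin n → ZMod 2) : wtH (f + g) ≤ wtH f + wtH g := by
  classical
  unfold wtH
  calc (univ.filter fun i => (f + g) i ≠ 0).card
      ≤ ((univ.filter fun i => f i ≠ 0) ∪ (univ.filter fun i => g i ≠ 0)).card := by
        apply card_le_card
        intro i hi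
        simp only [mem_filter, mem_univ, true_and, Pi.add_apply] at hi
        simp only [mem_union, mem_filter, mem_univ, true_and]
        by_contra hc
        push_neg at hc
        simp [hc.1, hc.2] at hi
    _ ≤ _ := card_union_le _ _

lemma leeWt_neg {a b : ℕ} (w : Vec a b) : leeWt (-w) = leeWt w := by
  simp only [leeWt, Prod.fst_neg, Prod.snd_neg, Pi.neg_apply, wtH_neg, leeWt4_neg]

lemma leeWt_add_le {a b : ℕ} (w z : Vec a b) : leeWt (w + z) ≤ leeWt w + leeWt z := by
  simp only [leeWt, Prod.fst_add, Prod.snd_add, Pi.add_apply]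
  have h1 := wtH_add_le w.1 z.1
  have h2 : ∑ j, leeWt4 (w.2 j + z.2 j) ≤ ∑ j, leeWt4 (w.2 j) + ∑ j, leeWt4 (z.2 j) := by
    rw [← Finset.sum_add_distrib]
    exact Finset.sum_le_sum fun j _ => leeWt4_add_le _ _
  omega

lemma leeWt_zero {a b : ℕ} : leeWt (0 : Vec a b) = 0 := by
  simp [leeWt, wtH, leeWt4]

lemma wtH_append {m n : ℕ} (f : Fin m → ZMod 2) (g : Fin n → ZMod 2) :
    wtH (Fin.append f g) = wtH f + wtH g := by
  classical
  simp only [wtH, Finset.card_filter]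
  rw [Fin.sum_univ_add]
  simp [Fin.append_left, Fin.append_right]

lemma leeWt_plVec {a b : ℕ} (u v : Vec a b) :
    leeWt (plVec u v) = leeWt u + leeWt (u + v) := by
  simp only [leeWt, plVec, wtH_append, Prod.fst_add, Prod.snd_add, Pi.add_apply]
  rw [Fin.sum_univ_add]
  simp only [Fin.append_left, Fin.append_right, Pi.add_apply]
  ring

lemma plVec_eq_zero_iff {a b : ℕ} (u v : Vec a b) : plVec u v = 0 ↔ u = 0 ∧ v = 0 := by
  constructor
  · intro h
    have hu1 : u.1 = 0 := funext fun i => by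
      have := congrFun (congrArg Prod.fst h) (Fin.castAdd a i)
      simpa [plVec, Fin.append_left] using this
    have hu2 : u.2 = 0 := funext fun i => by
      have := congrFun (congrArg Prod.snd h) (Fin.castAdd b i)
      simpa [plVec, Fin.append_left] using this
    have hv1 : v.1 = 0 := funext fun i => by
      have := congrFun (congrArg Prod.fst h) (Fin.natAdd a i)
      simp only [plVec, Fin.append_right, Pi.add_apply] at this
      have h0 : u.1 i = 0 := by rw [hu1]; rfl
      simpa [h0] using this
    have hv2 : v.2 = 0 := funext fun i => by
      have := congrFun (congrArg Prod.snd h) (Fin.natAdd b i)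
      simp only [plVec, Fin.append_right, Pi.add_apply] at this
      have h0 : u.2 i = 0 := by rw [hu2]; rfl
      simpa [h0] using this
    exact ⟨Prod.ext hu1 hu2, Prod.ext hv1 hv2⟩
  · rintro ⟨rfl, rfl⟩
    unfold plVec
    refine Prod.ext ?_ ?_ <;>
    · funext i
      dsimp only
      refine Fin.addCases (fun j => ?_) (fun j => ?_) i
      · rw [Fin.append_left]; simp
      · rw [Fin.append_right]; simp

lemma minLee_le {a b : ℕ} {S : Set (Vec a b)} {w : Vec a b} (hw : w ∈ S) (hne : w ≠ 0) :
    minLee S ≤ leeWt w :=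
  Nat.sInf_le ⟨w, ⟨hw, hne⟩, rfl⟩

lemma minLee_exists {a b : ℕ} {S : Set (Vec a b)} (h : (S \ {0}).Nonempty) :
    ∃ w ∈ S, w ≠ 0 ∧ leeWt w = minLee S := by
  obtain ⟨w, ⟨hw, hne⟩, heq⟩ := Nat.sInf_mem (h.image leeWt)
  exact ⟨w, hw, hne, heq⟩

end Aux

/-- for nonzero `ℤ₂ℤ₄`-additive codes `X, Y` with minimum Lee distances
`dX, dY`, the Plotkin code has minimum Lee distance exactly `min {2dX, dY}`. -/
theorem plotkin_min_distance (α β : ℕ) (X Y : AddSubgroup (Vec α β))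
    (dX dY : ℕ) (hdX : minLee (X : Set (Vec α β)) = dX) (hdY : minLee (Y : Set (Vec α β)) = dY)
    (hX : X ≠ ⊥) (hY : Y ≠ ⊥) :
    minLee (plotkinSet (X : Set (Vec α β)) (Y : Set (Vec α β))) = min (2 * dX) dY := by
    classical
  -- extract nonzero elements from X and Y
  have hXne : ((X : Set (Vec α β)) \ {0}).Nonempty := by
    rw [AddSubgroup.ne_bot_iff_exists_ne_zero] at hX
    obtain ⟨⟨x, hx⟩, hne⟩ := hX
    exact ⟨x, hx, by simpa using hne⟩
  have hYne : ((Y : Set (Vec α β)) \ {0}).Nonempty := by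
    rw [AddSubgroup.ne_bot_iff_exists_ne_zero] at hY
    obtain ⟨⟨y, hy⟩, hne⟩ := hY
    exact ⟨y, hy, by simpa using hne⟩
  obtain ⟨x0, hx0, hx0ne, hx0wt⟩ := minLee_exists hXne
  obtain ⟨y0, hy0, hy0ne, hy0wt⟩ := minLee_exists hYne
  rw [hdX] at hx0wt
  rw [hdY] at hy0wt
  apply le_antisymm
  · -- upper bound
    apply le_min
    · have hmem : plVec x0 0 ∈ plotkinSet (X : Set (Vec α β)) (Y : Set (Vec α β)) :=
        ⟨x0, hx0, 0, Y.zero_mem, rfl⟩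
      have hne : plVec x0 (0 : Vec α β) ≠ 0 := by
        rw [Ne, plVec_eq_zero_iff]
        exact fun h => hx0ne h.1
      calc minLee _ ≤ leeWt (plVec x0 0) := minLee_le hmem hne
        _ = 2 * dX := by rw [leeWt_plVec, add_zero, hx0wt]; ring
    · have hmem : plVec 0 y0 ∈ plotkinSet (X : Set (Vec α β)) (Y : Set (Vec α β)) :=
        ⟨0, X.zero_mem, y0, hy0, rfl⟩
      have hne : plVec (0 : Vec α β) y0 ≠ 0 := by
        rw [Ne, plVec_eq_zero_iff]
        exact fun h => hy0ne h.2
      calc minLee _ ≤ leeWt (plVec 0 y0) := minLee_le hmem hne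
        _ = dY := by rw [leeWt_plVec, zero_add, leeWt_zero, zero_add, hy0wt]
  · -- lower bound
    apply le_csInf
    · exact ⟨leeWt (plVec x0 0), plVec x0 0,
        ⟨⟨x0, hx0, 0, Y.zero_mem, rfl⟩, by
          rw [Set.mem_singleton_iff, plVec_eq_zero_iff]
          exact fun h => hx0ne h.1⟩, rfl⟩
    · rintro d ⟨w, ⟨⟨u, hu, v, hv, rfl⟩, hne⟩, rfl⟩
      rw [leeWt_plVec]
      by_cases hv0 : v = 0
      · subst hv0
        have hune : u ≠ 0 := fun h => hne (by simp [plVec_eq_zero_iff, h])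
        have : dX ≤ leeWt u := hdX ▸ minLee_le hu hune
        rw [add_zero]
        omega
      · have hvwt : dY ≤ leeWt v := hdY ▸ minLee_le hv hv0
        have htri : leeWt v ≤ leeWt (u + v) + leeWt u := by
          have : v = (u + v) + (-u) := by abel
          calc leeWt v = leeWt ((u + v) + (-u)) := by rw [← this]
            _ ≤ leeWt (u + v) + leeWt (-u) := leeWt_add_le _ _
            _ = leeWt (u + v) + leeWt u := by rw [leeWt_neg]
        have := min_le_right (2 * dX) dY
        omega
end

section
/- Define binary Reed-Muller style codes recursively over ℤ₂ via Plotkin: C(0,m) = repetition code of length 2^m, C(m,m) = ℤ₂^(2^m), and C(r,m) = {(u,u+v) : u ∈ C(r,m−1), v ∈ C(r−1,m−1)} for 0 < r < m. Then C(r,m) has dimension ∑_{i=0}^{r} binom(m,i) and minimum Hamming distance 2^(m−r). -/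
open Finset

theorem pow2split (m : ℕ) : 2 ^ (m + 1) = 2 ^ m + 2 ^ m := by rw [pow_succ, mul_two]

/-- Binary Reed–Muller style codes defined recursively via the Plotkin construction:
`C(0,m)` is the repetition code, `C(r,m) = ℤ₂^(2^m)` for `r ≥ m`, and
`C(r,m) = {(u,u+v) : u ∈ C(r,m−1), v ∈ C(r−1,m−1)}` for `0 < r < m`. -/
def RM : (m : ℕ) → ℕ → Set (Fin (2 ^ m) → ZMod 2)
  | 0, _ => Set.univ
  | m + 1, 0 => {x | ∃ c, ∀ i, x i = c}
  | m + 1, r + 1 =>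
    if m + 1 ≤ r + 1 then Set.univ
    else {w | ∃ u ∈ RM m (r + 1), ∃ v ∈ RM m r,
      w = Fin.append u (u + v) ∘ Fin.cast (pow2split m)}

/-! ### Auxiliary lemmas about Hamming distance -/

lemma hamDist_eq_sum {n : ℕ} (x y : Fin n → ZMod 2) :
    hammingDist x y = ∑ i, if x i = y i then 0 else 1 := by
  rw [hammingDist, Finset.card_filter]
  refine Finset.sum_congr rfl fun i _ => ?_
  by_cases h : x i = y i <;> simp [h]

lemma ham_append (m : ℕ) (a b c d : Fin (2^m) → ZMod 2) :
    hammingDist (Fin.append a b ∘ Fin.cast (pow2split m))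
      (Fin.append c d ∘ Fin.cast (pow2split m)) = hammingDist a c + hammingDist b d := by
  rw [hamDist_eq_sum, hamDist_eq_sum, hamDist_eq_sum]
  rw [Fintype.sum_equiv (finCongr (pow2split m))
    (fun i => if (Fin.append a b ∘ Fin.cast (pow2split m)) i = (Fin.append c d ∘ Fin.cast (pow2split m)) i then 0 else 1)
    (fun j => if Fin.append a b j = Fin.append c d j then 0 else 1) (fun i => rfl)]
  rw [Fin.sum_univ_add (f := fun j : Fin (2^m + 2^m) => if Fin.append a b j = Fin.append c d j then 0 else 1)]
  simp only [Fin.append_left, Fin.append_right]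

lemma ham_add_right {n : ℕ} (a b c : Fin n → ZMod 2) :
    hammingDist (a + c) (b + c) = hammingDist a b := by
  unfold hammingDist
  congr 1
  ext i
  simp [add_left_inj]

lemma fin_append_add {n N : ℕ} (e : N = n + n) (a b c d : Fin n → ZMod 2) :
    Fin.append (a + c) (b + d) ∘ Fin.cast e
      = (Fin.append a b ∘ Fin.cast e) + (Fin.append c d ∘ Fin.cast e) := by
  funext i
  simp only [Function.comp_apply, Pi.add_apply]
  induction (Fin.cast e i) using Fin.addCases with
  | left j => simp only [Fin.append_left, Pi.add_apply]
  | right j => simp only [Fin.append_right, Pi.add_apply]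

lemma fin_append_smul {n N : ℕ} (e : N = n + n) (s : ZMod 2) (a b : Fin n → ZMod 2) :
    Fin.append (s • a) (s • b) ∘ Fin.cast e
      = s • (Fin.append a b ∘ Fin.cast e) := by
  funext i
  simp only [Function.comp_apply, Pi.smul_apply]
  induction (Fin.cast e i) using Fin.addCases with
  | left j => simp only [Fin.append_left, Pi.smul_apply]
  | right j => simp only [Fin.append_right, Pi.smul_apply]

lemma append_cast_inj {m : ℕ} {a b c d : Fin (2^m) → ZMod 2}
    (h : Fin.append a b ∘ Fin.cast (pow2split m) = Fin.append c d ∘ Fin.cast (pow2split m)) :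
    a = c ∧ b = d := by
  have h2 : Fin.append a b = Fin.append c d := by
    funext j
    have := congrFun h (Fin.cast (pow2split m).symm j)
    simpa using this
  constructor
  · funext i
    have := congrFun h2 (Fin.castAdd _ i)
    rw [Fin.append_left, Fin.append_left] at this; exact this
  · funext i
    have := congrFun h2 (Fin.natAdd _ i)
    rw [Fin.append_right, Fin.append_right] at this; exact this

/-! ### Auxiliary lemmas about `minHam` -/

lemma minHam_le {n : ℕ} {S : Set (Fin n → ZMod 2)} {x y : Fin n → ZMod 2}
    (hx : x ∈ S) (hy : y ∈ S) (hxy : x ≠ y) : minHam S ≤ hammingDist x y :=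
  Nat.sInf_le ⟨x, hx, y, hy, hxy, rfl⟩

lemma minHam_eq {n : ℕ} {S : Set (Fin n → ZMod 2)} {V : ℕ}
    (hmem : ∃ x ∈ S, ∃ y ∈ S, x ≠ y ∧ hammingDist x y = V)
    (hlb : ∀ x ∈ S, ∀ y ∈ S, x ≠ y → V ≤ hammingDist x y) : minHam S = V := by
  obtain ⟨x, hx, y, hy, hxy, hd⟩ := hmem
  refine le_antisymm (hd ▸ minHam_le hx hy hxy) ?_
  have hne : {d | ∃ x ∈ S, ∃ y ∈ S, x ≠ y ∧ hammingDist x y = d}.Nonempty :=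
    ⟨V, x, hx, y, hy, hxy, hd⟩
  obtain ⟨a, ha, b, hb, hab, hd'⟩ := Nat.sInf_mem hne
  rw [minHam, ← hd']
  exact hlb a ha b hb hab

lemma minHam_exists {n : ℕ} {S : Set (Fin n → ZMod 2)} (h : minHam S ≠ 0) :
    ∃ x ∈ S, ∃ y ∈ S, x ≠ y ∧ hammingDist x y = minHam S := by
  by_cases hne : {d | ∃ x ∈ S, ∃ y ∈ S, x ≠ y ∧ hammingDist x y = d}.Nonempty
  · exact Nat.sInf_mem hne
  · exfalso
    apply h
    rw [minHam, Set.not_nonempty_iff_eq_empty.mp hne, Nat.sInf_empty]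

lemma univ_case (n : ℕ) (hn : 0 < n) : minHam (Set.univ : Set (Fin n → ZMod 2)) = 1 := by
  apply minHam_eq
  · refine ⟨0, trivial, Pi.single ⟨0, hn⟩ 1, trivial, ?_, ?_⟩
    · intro h
      have := congrFun h ⟨0, hn⟩
      simp [Pi.single_apply] at this
    · rw [hammingDist_comm, hammingDist_zero_right, hammingNorm]
      simp [Pi.single_apply, Finset.filter_eq']
  · intro x _ y _ hxy
    rcases Nat.eq_zero_or_pos (hammingDist x y) with h0 | h1
    · exact absurd (hammingDist_eq_zero.mp h0) hxy
    · exact h1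

lemma pascal_sum (m r : ℕ) :
    ∑ i ∈ range (r + 2), (m+1).choose i
      = ∑ i ∈ range (r + 2), m.choose i + ∑ i ∈ range (r + 1), m.choose i := by
  rw [Finset.sum_range_succ' (fun i => (m+1).choose i) (r+1),
      Finset.sum_range_succ' (fun i => m.choose i) (r+1)]
  simp only [Nat.choose_succ_succ, Nat.choose_zero_right, Finset.sum_add_distrib,
    Nat.succ_eq_add_one]
  omega

/-! ### Linear maps for the Plotkin construction -/

/-- Appending as a linear map. -/
def appendLM (m : ℕ) :
    ((Fin (2^m) → ZMod 2) × (Fin (2^m) → ZMod 2)) →ₗ[ZMod 2] (Fin (2^(m+1)) → ZMod 2) where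
  toFun p := Fin.append p.1 p.2 ∘ Fin.cast (pow2split m)
  map_add' p q := fin_append_add (pow2split m) p.1 p.2 q.1 q.2
  map_smul' s p := fin_append_smul (pow2split m) s p.1 p.2

/-- `u ↦ (u, u)` followed by append. -/
def L₁ (m : ℕ) : (Fin (2^m) → ZMod 2) →ₗ[ZMod 2] (Fin (2^(m+1)) → ZMod 2) :=
  (appendLM m) ∘ₗ LinearMap.prod LinearMap.id LinearMap.id

/-- `v ↦ (0, v)` followed by append. -/
def L₂ (m : ℕ) : (Fin (2^m) → ZMod 2) →ₗ[ZMod 2] (Fin (2^(m+1)) → ZMod 2) :=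
  (appendLM m) ∘ₗ LinearMap.prod 0 LinearMap.id

lemma L₁_apply (m : ℕ) (u : Fin (2^m) → ZMod 2) :
    L₁ m u = Fin.append u u ∘ Fin.cast (pow2split m) := rfl

lemma L₂_apply (m : ℕ) (v : Fin (2^m) → ZMod 2) :
    L₂ m v = Fin.append (0 : Fin (2^m) → ZMod 2) v ∘ Fin.cast (pow2split m) := rfl

lemma L₁_inj (m : ℕ) : Function.Injective (L₁ m) := by
  intro u u' he
  have he' : Fin.append u u ∘ Fin.cast (pow2split m)
      = Fin.append u' u' ∘ Fin.cast (pow2split m) := he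
  exact (append_cast_inj he').1

lemma L₂_inj (m : ℕ) : Function.Injective (L₂ m) := by
  intro v v' he
  have he' : Fin.append (0 : Fin (2^m) → ZMod 2) v ∘ Fin.cast (pow2split m)
      = Fin.append (0 : Fin (2^m) → ZMod 2) v' ∘ Fin.cast (pow2split m) := he
  exact (append_cast_inj he').2

lemma L_sum (m : ℕ) (u v : Fin (2^m) → ZMod 2) :
    L₁ m u + L₂ m v = Fin.append u (u + v) ∘ Fin.cast (pow2split m) := by
  have := fin_append_add (pow2split m) u u 0 v
  rw [add_zero] at this
  exact this.symm

/-- `C(r,m)` is a linear code of dimension `∑_{i=0}^r binom(m,i)` and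
minimum Hamming distance `2^(m−r)`. -/
theorem RM_dim_and_distance (m r : ℕ) (h : r ≤ m) :
    (∃ S : Submodule (ZMod 2) (Fin (2 ^ m) → ZMod 2),
        (S : Set (Fin (2 ^ m) → ZMod 2)) = RM m r ∧
        Module.finrank (ZMod 2) S = ∑ i ∈ Finset.range (r + 1), m.choose i) ∧
      minHam (RM m r) = 2 ^ (m - r) := by
  induction m generalizing r with
  | zero =>
    interval_cases r
    refine ⟨⟨⊤, ?_, ?_⟩, ?_⟩
    · simp [RM]
    · simp [Module.finrank_fin_fun, finrank_top]
    · have huniv : RM 0 0 = Set.univ := rfl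
      rw [huniv, univ_case _ (by positivity)]
      norm_num
  | succ m ih =>
    rcases r with _ | r
    · -- repetition code
      have hpos : 0 < 2 ^ (m + 1) := by positivity
      have hRM : RM (m+1) 0 = {x : Fin (2^(m+1)) → ZMod 2 | ∃ c, ∀ i, x i = c} := rfl
      constructor
      · refine ⟨LinearMap.range (LinearMap.pi (fun _ : Fin (2^(m+1)) => LinearMap.id) :
          ZMod 2 →ₗ[ZMod 2] (Fin (2^(m+1)) → ZMod 2)), ?_, ?_⟩
        · ext x
          simp only [SetLike.mem_coe, LinearMap.mem_range, hRM, Set.mem_setOf_eq]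
          constructor
          · rintro ⟨c, rfl⟩
            exact ⟨c, fun i => rfl⟩
          · rintro ⟨c, hc⟩
            exact ⟨c, funext fun i => (hc i).symm⟩
        · rw [LinearMap.finrank_range_of_inj]
          · simp
          · intro c c' hcc
            have := congrFun hcc ⟨0, hpos⟩
            exact this
      · rw [hRM]
        have : (2:ℕ) ^ (m + 1 - 0) = 2 ^ (m+1) := by norm_num
        rw [this]
        apply minHam_eq
        · refine ⟨(fun _ => 0), ⟨0, fun _ => rfl⟩, (fun _ => 1), ⟨1, fun _ => rfl⟩, ?_, ?_⟩
          · intro hxy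
            have := congrFun hxy ⟨0, hpos⟩
            simp at this
          · rw [hamDist_eq_sum]
            simp [Finset.card_univ]
        · rintro x ⟨c, hc⟩ y ⟨c', hc'⟩ hxy
          have hcc : c ≠ c' := by
            rintro rfl
            exact hxy (funext fun i => by rw [hc i, hc' i])
          rw [hamDist_eq_sum]
          have : ∀ i : Fin (2^(m+1)), (if x i = y i then (0:ℕ) else 1) = 1 := by
            intro i
            rw [hc i, hc' i, if_neg hcc]
          rw [Finset.sum_congr rfl (fun i _ => this i)]
          simp [Finset.card_univ]
    · by_cases hle : m + 1 ≤ r + 1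
      · -- full space
        have hrm : r = m := by omega
        have huniv : RM (m+1) (r+1) = Set.univ := by
          simp only [RM]
          rw [if_pos hle]
        refine ⟨⟨⊤, ?_, ?_⟩, ?_⟩
        · simp [huniv]
        · rw [hrm, Nat.sum_range_choose]
          simp [Module.finrank_fin_fun, finrank_top]
        · rw [huniv, univ_case _ (by positivity), hrm]
          simp
      · -- Plotkin construction
        have hr1 : r + 1 ≤ m := by omega
        obtain ⟨⟨S₁, hS₁, hd₁⟩, hmin₁⟩ := ih (r+1) hr1
        obtain ⟨⟨S₂, hS₂, hd₂⟩, hmin₂⟩ := ih r (by omega)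
        have hRM : RM (m+1) (r+1) = {w | ∃ u ∈ RM m (r + 1), ∃ v ∈ RM m r,
            w = Fin.append u (u + v) ∘ Fin.cast (pow2split m)} := by
          simp only [RM]
          rw [if_neg hle]
        constructor
        · refine ⟨Submodule.map (L₁ m) S₁ ⊔ Submodule.map (L₂ m) S₂, ?_, ?_⟩
          · ext w
            simp only [SetLike.mem_coe, hRM, Set.mem_setOf_eq]
            constructor
            · intro hw
              obtain ⟨x, hx, y, hy, hxy⟩ := Submodule.mem_sup.mp hw
              obtain ⟨u, hu, rfl⟩ := Submodule.mem_map.mp hx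
              obtain ⟨v, hv, rfl⟩ := Submodule.mem_map.mp hy
              refine ⟨u, ?_, v, ?_, ?_⟩
              · rw [← hS₁]; exact hu
              · rw [← hS₂]; exact hv
              · rw [← hxy, L_sum]
            · rintro ⟨u, hu, v, hv, rfl⟩
              apply Submodule.mem_sup.mpr
              refine ⟨L₁ m u, Submodule.mem_map_of_mem ?_, L₂ m v,
                Submodule.mem_map_of_mem ?_, L_sum m u v⟩
              · rw [← SetLike.mem_coe, hS₁]; exact hu
              · rw [← SetLike.mem_coe, hS₂]; exact hv
          · have hdisj : Submodule.map (L₁ m) S₁ ⊓ Submodule.map (L₂ m) S₂ = ⊥ := by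
              rw [eq_bot_iff]
              intro x hx
              obtain ⟨hx1, hx2⟩ := Submodule.mem_inf.mp hx
              obtain ⟨u, hu, rfl⟩ := Submodule.mem_map.mp hx1
              obtain ⟨v, hv, hequ⟩ := Submodule.mem_map.mp hx2
              have he' : Fin.append (0 : Fin (2^m) → ZMod 2) v ∘ Fin.cast (pow2split m)
                  = Fin.append u u ∘ Fin.cast (pow2split m) := hequ
              have hu0 : u = 0 := ((append_cast_inj he').1).symm
              rw [hu0, map_zero]
              exact Submodule.zero_mem ⊥
            have hfr := Submodule.finrank_sup_add_finrank_inf_eq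
              (Submodule.map (L₁ m) S₁) (Submodule.map (L₂ m) S₂)
            rw [hdisj] at hfr
            have h1 : Module.finrank (ZMod 2) (Submodule.map (L₁ m) S₁)
                = ∑ i ∈ range (r + 2), m.choose i := by
              rw [← hd₁]
              exact (LinearEquiv.finrank_eq (Submodule.equivMapOfInjective _ (L₁_inj m) S₁)).symm
            have h2 : Module.finrank (ZMod 2) (Submodule.map (L₂ m) S₂)
                = ∑ i ∈ range (r + 1), m.choose i := by
              rw [← hd₂]
              exact (LinearEquiv.finrank_eq (Submodule.equivMapOfInjective _ (L₂_inj m) S₂)).symm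
            rw [h1, h2, finrank_bot] at hfr
            rw [pascal_sum]
            omega
        · have hexp : m + 1 - (r + 1) = m - r := by omega
          rw [hexp]
          have hpow0 : (2:ℕ) ^ (m - r) ≠ 0 := by positivity
          apply minHam_eq
          · -- achieve the distance
            have h0 : (0 : Fin (2^m) → ZMod 2) ∈ RM m (r+1) := by
              rw [← hS₁]; exact S₁.zero_mem
            obtain ⟨v, hv, v', hv', hvv', hdvv⟩ := minHam_exists (S := RM m r)
              (by rw [hmin₂]; positivity)
            rw [hmin₂] at hdvv
            refine ⟨Fin.append (0 : Fin (2^m) → ZMod 2) (0 + v) ∘ Fin.cast (pow2split m), ?_,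
              Fin.append (0 : Fin (2^m) → ZMod 2) (0 + v') ∘ Fin.cast (pow2split m), ?_, ?_, ?_⟩
            · rw [hRM]; exact ⟨0, h0, v, hv, rfl⟩
            · rw [hRM]; exact ⟨0, h0, v', hv', rfl⟩
            · intro heq
              obtain ⟨-, h2⟩ := append_cast_inj heq
              rw [zero_add, zero_add] at h2
              exact hvv' h2
            · rw [ham_append, hammingDist_self, zero_add, zero_add, zero_add, hdvv]
          · -- lower bound
            rintro w hw w' hw' hne
            rw [hRM] at hw hw'
            obtain ⟨u, hu, v, hv, rfl⟩ := hw
            obtain ⟨u', hu', v', hv', rfl⟩ := hw'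
            rw [ham_append]
            by_cases hvv : v = v'
            · subst hvv
              have huu : u ≠ u' := by
                rintro rfl
                exact hne rfl
              have hd : 2 ^ (m - (r+1)) ≤ hammingDist u u' := by
                have := minHam_le hu hu' huu
                rw [hmin₁] at this
                exact this
              rw [ham_add_right]
              have hpow : (2:ℕ) ^ (m - r) = 2 ^ (m - (r+1)) + 2 ^ (m - (r+1)) := by
                rw [← two_mul, ← pow_succ']
                congr 1
                omega
              omega
            · have h1 : 2 ^ (m - r) ≤ hammingDist v v' := by
                have := minHam_le hv hv' hvv
                rw [hmin₂] at this
                exact this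
              have h2 : hammingDist v v'
                  ≤ hammingDist u u' + hammingDist (u + v) (u' + v') := by
                have e1 : hammingDist v v' = hammingDist (v + u) (v' + u) :=
                  (ham_add_right v v' u).symm
                have e2 := hammingDist_triangle (v + u) (v' + u') (v' + u)
                have e3 : hammingDist (v' + u') (v' + u) = hammingDist u' u := by
                  rw [add_comm v' u', add_comm v' u]
                  exact ham_add_right u' u v'
                rw [e1]
                calc hammingDist (v + u) (v' + u)
                    ≤ hammingDist (v + u) (v' + u') + hammingDist (v' + u') (v' + u) := e2
                  _ = hammingDist u u' + hammingDist (u + v) (u' + v') := by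
                      rw [e3, add_comm v u, add_comm v' u', hammingDist_comm u' u, add_comm]
              omega
end

section
/- For the BA-Plotkin construction applied to codes X, Y, Z of types (α,β;γ',δ'), (α,β;γ'',δ''), (α,β;γ''',δ'''), the resulting code has type (2α, α+4β; γ'+γ''', δ'+γ''+2δ''+δ'''); in particular its cardinality is 2^{γ'+γ'''}·4^{δ'+γ''+2δ''+δ'''} and its binary length is 4α+8β. -/
open Finset

/-- Embedding `ℤ₂ → ℤ₄`, `0 ↦ 0`, `1 ↦ 1` (binary symbols read in `ℤ₄`). -/
def i24 (x : ZMod 2) : ZMod 4 := (x.val : ZMod 4)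

/-- Doubling `ℤ₂ → ℤ₄`, `0 ↦ 0`, `1 ↦ 2` (the block `2g₂`). -/
def dbl (x : ZMod 2) : ZMod 4 := 2 * (x.val : ZMod 4)

/-- A choice of half: `2 ↦ 1`, otherwise `0` (recovering `q'` from `2q'`). -/
def half4 (x : ZMod 4) : ZMod 4 := if x = 2 then 1 else 0

/-- Concatenation of five quaternary blocks. -/
def cat5 {a b c d e : ℕ} (p : Fin a → ZMod 4) (w : Fin b → ZMod 4) (x : Fin c → ZMod 4)
    (y : Fin d → ZMod 4) (z : Fin e → ZMod 4) : Fin (a + (b + (c + (d + e)))) → ZMod 4 :=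
  Fin.append p (Fin.append w (Fin.append x (Fin.append y z)))

/-- Ambient space `ℤ₂^(2a) × ℤ₄^(a+4b)` of the BA-Plotkin construction. -/
abbrev BAVec (a b : ℕ) := Vec (a + a) (a + (b + (b + (b + b))))

/-- Row `(g, g | 2g₂, q, q, q, q)` for a generator `(g|q)` of `X`. -/
def rowX {a b : ℕ} (g : Vec a b) : BAVec a b :=
  (Fin.append g.1 g.1, cat5 (fun k => dbl (g.1 k)) g.2 g.2 g.2 g.2)

/-- Row `(0, b | b, 0, 2q', q', 3q')` for an order-two generator `(b|2q')` of `Y`. -/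
def rowY2 {a b : ℕ} (g : Vec a b) : BAVec a b :=
  (Fin.append 0 g.1,
    cat5 (fun k => i24 (g.1 k)) 0 (2 • (half4 ∘ g.2)) (half4 ∘ g.2) (3 • (half4 ∘ g.2)))

/-- Row `(0, b | b, 0, q, 2q, 3q)` for an order-four generator `(b|q)` of `Y`. -/
def rowY4a {a b : ℕ} (g : Vec a b) : BAVec a b :=
  (Fin.append 0 g.1, cat5 (fun k => i24 (g.1 k)) 0 g.2 (2 • g.2) (3 • g.2))

/-- Row `(b, b | 0, 0, 0, q, q)` for an order-four generator `(b|q)` of `Y`. -/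
def rowY4b {a b : ℕ} (g : Vec a b) : BAVec a b :=
  (Fin.append g.1 g.1, cat5 0 0 0 g.2 g.2)

/-- Row `(0, g | 0, 0, 0, 0, q)` for a generator `(g|q)` of `Z`. -/
def rowZ {a b : ℕ} (g : Vec a b) : BAVec a b :=
  (Fin.append 0 g.1, cat5 0 0 0 0 g.2)

/-- The set of generators of the BA-Plotkin construction, built from standard
generator matrices of `X`, `Y`, `Z` given by group isomorphisms
`ℤ₂^γ × ℤ₄^δ ≃ X` etc. (order-two generators come from `(eᵢ, 0)`, order-four
generators from `(0, eⱼ)`). -/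
def baGens {a b γX δX γY δY γZ δZ : ℕ} {X Y Z : AddSubgroup (Vec a b)}
    (fX : Vec γX δX ≃+ X) (fY : Vec γY δY ≃+ Y) (fZ : Vec γZ δZ ≃+ Z) :
    Set (BAVec a b) :=
  (Set.range fun i : Fin γX => rowX ((fX (Pi.single i 1, 0) : X) : Vec a b)) ∪
  (Set.range fun j : Fin δX => rowX ((fX (0, Pi.single j 1) : X) : Vec a b)) ∪
  (Set.range fun i : Fin γY => rowY2 ((fY (Pi.single i 1, 0) : Y) : Vec a b)) ∪
  (Set.range fun j : Fin δY => rowY4a ((fY (0, Pi.single j 1) : Y) : Vec a b)) ∪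
  (Set.range fun j : Fin δY => rowY4b ((fY (0, Pi.single j 1) : Y) : Vec a b)) ∪
  (Set.range fun i : Fin γZ => rowZ ((fZ (Pi.single i 1, 0) : Z) : Vec a b)) ∪
  (Set.range fun j : Fin δZ => rowZ ((fZ (0, Pi.single j 1) : Z) : Vec a b))

-- ==== auxiliary ZMod facts ====
namespace BAaux

lemma z2_cast_val : ∀ x : ZMod 2, ((x.val : ℕ) : ZMod 2) = x := by decide
lemma z4_cast_val : ∀ x : ZMod 4, ((x.val : ℕ) : ZMod 4) = x := by decide
lemma dbl_add : ∀ x y : ZMod 2, dbl (x + y) = dbl x + dbl y := by decide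
lemma dbl_add_eq_zero : ∀ x y : ZMod 2, dbl x + dbl y = 0 → x = y := by decide
def red2 (q : ZMod 4) : ZMod 2 := (q.val : ZMod 2)
lemma red2_add : ∀ q r : ZMod 4, red2 (q + r) = red2 q + red2 r := by decide
lemma red2_i24 : ∀ x : ZMod 2, red2 (i24 x) = x := by decide
lemma red2_dbl : ∀ x : ZMod 2, red2 (dbl x) = 0 := by decide
lemma red2_zero_order : ∀ q : ZMod 4, red2 q = 0 → 2 • q = 0 := by decide
lemma half4_two_smul : ∀ q : ZMod 4, 2 • q = 0 → 2 • half4 q = q := by decide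
def half2 (q : ZMod 4) : ZMod 2 := if q = 2 then 1 else 0
lemma val_order2 : ∀ q : ZMod 4, 2 • q = 0 → q.val = 2 * (half2 q).val := by decide
lemma half2_zero : ∀ q : ZMod 4, 2 • q = 0 → half2 q = 0 → q = 0 := by decide
lemma two_i24 : ∀ x : ZMod 2, 2 • i24 x = dbl x := by decide
lemma z2_4smul : ∀ x : ZMod 2, 4 • x = 0 := by decide
lemma z4_4smul : ∀ x : ZMod 4, 4 • x = 0 := by decide
lemma z2_2smul : ∀ x : ZMod 2, 2 • x = 0 := by decide

lemma nsmul_mod4 {M : Type*} [AddCommMonoid M] (v : M) (h : 4 • v = 0) (k : ℕ) :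
    k • v = (k % 4) • v := by
  conv_lhs => rw [← Nat.div_add_mod k 4]
  rw [add_nsmul, mul_comm, mul_smul, h, smul_zero, zero_add]

lemma val_add_smul {M : Type*} [AddCommMonoid M] (v : M) (h : 4 • v = 0) (s t : ZMod 4) :
    (s + t).val • v = s.val • v + t.val • v := by
  rw [ZMod.val_add, ← add_nsmul, ← nsmul_mod4 v h]

def appendAddEquiv (m n : ℕ) (M : Type*) [AddCommMonoid M] :
    ((Fin m → M) × (Fin n → M)) ≃+ (Fin (m + n) → M) where
  toFun p := Fin.append p.1 p.2
  invFun f := (fun i => f (Fin.castAdd n i), fun i => f (Fin.natAdd m i))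
  left_inv p := by
    refine Prod.ext ?_ ?_ <;> funext i <;> simp [Fin.append_left, Fin.append_right]
  right_inv f := by
    funext i
    induction i using Fin.addCases <;> simp [Fin.append_left, Fin.append_right]
  map_add' p q := by
    funext i
    induction i using Fin.addCases <;>
      simp [Fin.append_left, Fin.append_right]

def app5 (n1 n2 n3 n4 n5 : ℕ) (M : Type*) [AddCommMonoid M] :
    ((Fin n1 → M) × ((Fin n2 → M) × ((Fin n3 → M) × ((Fin n4 → M) × (Fin n5 → M))))) ≃+
      (Fin (n1 + (n2 + (n3 + (n4 + n5)))) → M) :=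
  ((AddEquiv.refl _).prodCongr
    (((AddEquiv.refl _).prodCongr
      (((AddEquiv.refl _).prodCongr (appendAddEquiv n4 n5 M)).trans
        (appendAddEquiv n3 (n4 + n5) M))).trans
      (appendAddEquiv n2 (n3 + (n4 + n5)) M))).trans
    (appendAddEquiv n1 (n2 + (n3 + (n4 + n5))) M)

example (p : Fin 2 → ZMod 4) (w x y z : Fin 3 → ZMod 4) :
    app5 2 3 3 3 3 (ZMod 4) (p, (w, (x, (y, z)))) =
      Fin.append p (Fin.append w (Fin.append x (Fin.append y z))) := rfl

abbrev EVec (a b : ℕ) :=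
  ((Fin a → ZMod 2) × (Fin a → ZMod 2)) ×
    ((Fin a → ZMod 4) × ((Fin b → ZMod 4) × ((Fin b → ZMod 4) ×
      ((Fin b → ZMod 4) × (Fin b → ZMod 4)))))

lemma four_smul_EVec {a b : ℕ} (v : EVec a b) : 4 • v = 0 := by
  refine Prod.ext (Prod.ext ?_ ?_) (Prod.ext ?_ (Prod.ext ?_ (Prod.ext ?_ (Prod.ext ?_ ?_)))) <;>
    funext i <;>
    simp only [Prod.smul_fst, Prod.smul_snd, Pi.smul_apply, Prod.fst_zero, Prod.snd_zero,
      Pi.zero_apply, z2_4smul, z4_4smul]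

-- decomposition lemmas
lemma sum_nsmul_single₁ {γ δ : ℕ} (k : Fin γ → ℕ) :
    (∑ i, k i • ((Pi.single i 1, 0) : Vec γ δ)) = ((fun i => ((k i : ℕ) : ZMod 2)), 0) := by
  refine Prod.ext ?_ ?_
  · rw [Prod.fst_sum]
    funext m
    rw [Finset.sum_apply]
    rw [Finset.sum_eq_single m]
    · simp [Pi.single_eq_same, nsmul_eq_mul]
    · intro i _ hne
      simp [Prod.smul_fst, Pi.single_eq_of_ne (Ne.symm hne)]
    · simp
  · rw [Prod.snd_sum]
    simp

lemma sum_nsmul_single₂ {γ δ : ℕ} (k : Fin δ → ℕ) :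
    (∑ j, k j • ((0, Pi.single j 1) : Vec γ δ)) = (0, (fun j => ((k j : ℕ) : ZMod 4))) := by
  refine Prod.ext ?_ ?_
  · rw [Prod.fst_sum]; simp
  · rw [Prod.snd_sum]
    funext m
    rw [Finset.sum_apply]
    rw [Finset.sum_eq_single m]
    · simp [Pi.single_eq_same, nsmul_eq_mul]
    · intro j _ hne
      simp [Prod.smul_snd, Pi.single_eq_of_ne (Ne.symm hne)]
    · simp

end BAaux

namespace BAaux

def eBA (a b : ℕ) : EVec a b ≃+ BAVec a b :=
  (appendAddEquiv a a (ZMod 2)).prodCongr (app5 a b b b b (ZMod 4))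

-- rows in EVec
def rX {a b : ℕ} (g : Vec a b) : EVec a b :=
  ((g.1, g.1), ((fun k => dbl (g.1 k)), (g.2, (g.2, (g.2, g.2)))))
def rY2 {a b : ℕ} (g : Vec a b) : EVec a b :=
  ((0, g.1), ((fun k => i24 (g.1 k)), (0, (2 • (half4 ∘ g.2), (half4 ∘ g.2, 3 • (half4 ∘ g.2))))))
def rY4a {a b : ℕ} (g : Vec a b) : EVec a b :=
  ((0, g.1), ((fun k => i24 (g.1 k)), (0, (g.2, (2 • g.2, 3 • g.2)))))
def rY4b {a b : ℕ} (g : Vec a b) : EVec a b :=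
  ((g.1, g.1), (0, (0, (0, (g.2, g.2)))))
def rZ {a b : ℕ} (g : Vec a b) : EVec a b :=
  ((0, g.1), (0, (0, (0, (0, g.2)))))

lemma eBA_rX {a b : ℕ} (g : Vec a b) : eBA a b (rX g) = rowX g := rfl
lemma eBA_rY2 {a b : ℕ} (g : Vec a b) : eBA a b (rY2 g) = rowY2 g := rfl
lemma eBA_rY4a {a b : ℕ} (g : Vec a b) : eBA a b (rY4a g) = rowY4a g := rfl
lemma eBA_rY4b {a b : ℕ} (g : Vec a b) : eBA a b (rY4b g) = rowY4b g := rfl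
lemma eBA_rZ {a b : ℕ} (g : Vec a b) : eBA a b (rZ g) = rowZ g := rfl

def rXhom {a b : ℕ} : Vec a b →+ EVec a b :=
  AddMonoidHom.mk' rX (by
    intro g h
    refine Prod.ext (Prod.ext ?_ ?_) (Prod.ext ?_ (Prod.ext ?_ (Prod.ext ?_ (Prod.ext ?_ ?_)))) <;>
      simp only [rX, Prod.fst_add, Prod.snd_add, Prod.smul_fst, Prod.smul_snd] <;>
      try rfl
    funext k
    simp [Pi.add_apply, dbl_add])

def rY4bhom {a b : ℕ} : Vec a b →+ EVec a b :=
  AddMonoidHom.mk' rY4b (by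
    intro g h
    refine Prod.ext (Prod.ext ?_ ?_) (Prod.ext ?_ (Prod.ext ?_ (Prod.ext ?_ (Prod.ext ?_ ?_)))) <;>
      simp [rY4b, Prod.fst_add, Prod.snd_add])

def rZhom {a b : ℕ} : Vec a b →+ EVec a b :=
  AddMonoidHom.mk' rZ (by
    intro g h
    refine Prod.ext (Prod.ext ?_ ?_) (Prod.ext ?_ (Prod.ext ?_ (Prod.ext ?_ (Prod.ext ?_ ?_)))) <;>
      simp [rZ, Prod.fst_add, Prod.snd_add])

@[simp] lemma rXhom_apply {a b : ℕ} (g : Vec a b) : rXhom g = rX g := rfl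
@[simp] lemma rY4bhom_apply {a b : ℕ} (g : Vec a b) : rY4bhom g = rY4b g := rfl
@[simp] lemma rZhom_apply {a b : ℕ} (g : Vec a b) : rZhom g = rZ g := rfl

def dblHom : ZMod 2 →+ ZMod 4 := AddMonoidHom.mk' dbl (fun x y => dbl_add x y)
def red2Hom : ZMod 4 →+ ZMod 2 := AddMonoidHom.mk' red2 (fun x y => red2_add x y)
def piRed2 (n : ℕ) : (Fin n → ZMod 4) →+ (Fin n → ZMod 2) :=
  AddMonoidHom.mk' (fun f k => red2 (f k)) (by intro f g; funext k; exact red2_add _ _)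

end BAaux

namespace BAaux

variable {α β γ' δ' γ'' δ'' γ''' δ''' : ℕ} {X Y Z : AddSubgroup (Vec α β)}

def ψ {γ δ : ℕ} {W : AddSubgroup (Vec α β)} (f : Vec γ δ ≃+ W) : Vec γ δ →+ Vec α β :=
  W.subtype.comp f.toAddMonoidHom

lemma ψ_inj {γ δ : ℕ} {W : AddSubgroup (Vec α β)} (f : Vec γ δ ≃+ W) :
    Function.Injective (ψ f) := fun _ _ h => f.injective (Subtype.coe_injective h)

abbrev DVec (γ' δ' γ'' δ'' γ''' δ''' : ℕ) :=
  Vec γ' δ' × (((Fin γ'' → ZMod 4) × ((Fin δ'' → ZMod 4) × (Fin δ'' → ZMod 4))) × Vec γ''' δ''')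

variable (fX : Vec γ' δ' ≃+ X) (fY : Vec γ'' δ'' ≃+ Y) (fZ : Vec γ''' δ''' ≃+ Z)

def S2hom : (Fin γ'' → ZMod 4) →+ EVec α β :=
  AddMonoidHom.mk' (fun b => ∑ i, ((b i).val) • rY2 (ψ fY (Pi.single i 1, 0))) (by
    intro b c
    rw [← Finset.sum_add_distrib]
    refine Finset.sum_congr rfl fun i _ => ?_
    rw [Pi.add_apply]
    exact val_add_smul _ (four_smul_EVec _) _ _)

def S4hom : (Fin δ'' → ZMod 4) →+ EVec α β :=
  AddMonoidHom.mk' (fun c => ∑ j, ((c j).val) • rY4a (ψ fY (0, Pi.single j 1))) (by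
    intro b c
    rw [← Finset.sum_add_distrib]
    refine Finset.sum_congr rfl fun j _ => ?_
    rw [Pi.add_apply]
    exact val_add_smul _ (four_smul_EVec _) _ _)

def inr2 (γ δ : ℕ) : (Fin δ → ZMod 4) →+ Vec γ δ :=
  AddMonoidHom.mk' (fun d => (0, d)) (by
    intro a b; refine Prod.ext ?_ ?_ <;> simp)

def Fhom : DVec γ' δ' γ'' δ'' γ''' δ''' →+ EVec α β :=
  (rXhom.comp ((ψ fX).comp (AddMonoidHom.mk' (fun p => p.1) (fun _ _ => rfl))))
    + ((S2hom fY).comp (AddMonoidHom.mk' (fun p => p.2.1.1) (fun _ _ => rfl)))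
    + ((S4hom fY).comp (AddMonoidHom.mk' (fun p => p.2.1.2.1) (fun _ _ => rfl)))
    + (rY4bhom.comp ((ψ fY).comp ((inr2 γ'' δ'').comp
        (AddMonoidHom.mk' (fun p => p.2.1.2.2) (fun _ _ => rfl)))))
    + (rZhom.comp ((ψ fZ).comp (AddMonoidHom.mk' (fun p => p.2.2) (fun _ _ => rfl))))

lemma Fhom_apply (p : DVec γ' δ' γ'' δ'' γ''' δ''') :
    Fhom fX fY fZ p =
      rXhom (ψ fX p.1)
        + (∑ i, ((p.2.1.1 i).val) • rY2 (ψ fY (Pi.single i 1, 0)))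
        + (∑ j, ((p.2.1.2.1 j).val) • rY4a (ψ fY (0, Pi.single j 1)))
        + rY4bhom (ψ fY (0, p.2.1.2.2))
        + rZhom (ψ fZ p.2.2) := rfl

def gens' : Set (EVec α β) :=
  (Set.range fun i : Fin γ' => rX (ψ fX (Pi.single i 1, 0))) ∪
  (Set.range fun j : Fin δ' => rX (ψ fX (0, Pi.single j 1))) ∪
  (Set.range fun i : Fin γ'' => rY2 (ψ fY (Pi.single i 1, 0))) ∪
  (Set.range fun j : Fin δ'' => rY4a (ψ fY (0, Pi.single j 1))) ∪
  (Set.range fun j : Fin δ'' => rY4b (ψ fY (0, Pi.single j 1))) ∪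
  (Set.range fun i : Fin γ''' => rZ (ψ fZ (Pi.single i 1, 0))) ∪
  (Set.range fun j : Fin δ''' => rZ (ψ fZ (0, Pi.single j 1)))

lemma mem1 (i : Fin γ') : rX (ψ fX (Pi.single i 1, 0)) ∈ gens' fX fY fZ :=
  Or.inl (Or.inl (Or.inl (Or.inl (Or.inl (Or.inl ⟨i, rfl⟩)))))
lemma mem2 (j : Fin δ') : rX (ψ fX (0, Pi.single j 1)) ∈ gens' fX fY fZ :=
  Or.inl (Or.inl (Or.inl (Or.inl (Or.inl (Or.inr ⟨j, rfl⟩)))))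
lemma mem3 (i : Fin γ'') : rY2 (ψ fY (Pi.single i 1, 0)) ∈ gens' fX fY fZ :=
  Or.inl (Or.inl (Or.inl (Or.inl (Or.inr ⟨i, rfl⟩))))
lemma mem4 (j : Fin δ'') : rY4a (ψ fY (0, Pi.single j 1)) ∈ gens' fX fY fZ :=
  Or.inl (Or.inl (Or.inl (Or.inr ⟨j, rfl⟩)))
lemma mem5 (j : Fin δ'') : rY4b (ψ fY (0, Pi.single j 1)) ∈ gens' fX fY fZ :=
  Or.inl (Or.inl (Or.inr ⟨j, rfl⟩))
lemma mem6 (i : Fin γ''') : rZ (ψ fZ (Pi.single i 1, 0)) ∈ gens' fX fY fZ :=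
  Or.inl (Or.inr ⟨i, rfl⟩)
lemma mem7 (j : Fin δ''') : rZ (ψ fZ (0, Pi.single j 1)) ∈ gens' fX fY fZ :=
  Or.inr ⟨j, rfl⟩

end BAaux

namespace BAaux

variable {α β γ' δ' γ'' δ'' γ''' δ''' : ℕ} {X Y Z : AddSubgroup (Vec α β)}
variable (fX : Vec γ' δ' ≃+ X) (fY : Vec γ'' δ'' ≃+ Y) (fZ : Vec γ''' δ''' ≃+ Z)

@[simp] lemma zero_rX : rX (0 : Vec α β) = 0 := by
  refine Prod.ext (Prod.ext rfl rfl) (Prod.ext ?_ rfl)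
  funext k; simp [rX, dbl]

@[simp] lemma zero_rY2 : rY2 (0 : Vec α β) = 0 := by
  refine Prod.ext (Prod.ext rfl rfl) (Prod.ext ?_ (Prod.ext rfl (Prod.ext ?_ (Prod.ext ?_ ?_)))) <;>
    funext k <;> simp [rY2, i24, half4] <;> decide

@[simp] lemma zero_rY4a : rY4a (0 : Vec α β) = 0 := by
  refine Prod.ext (Prod.ext rfl rfl) (Prod.ext ?_ (Prod.ext rfl (Prod.ext rfl (Prod.ext ?_ ?_)))) <;>
    funext k <;> simp [rY4a, i24]

@[simp] lemma zero_rY4b : rY4b (0 : Vec α β) = 0 := rfl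

@[simp] lemma zero_rZ : rZ (0 : Vec α β) = 0 := rfl

lemma z4_val_one : (1 : ZMod 4).val = 1 := rfl

lemma vec_split {γ δ : ℕ} (v : Vec γ δ) : v = (v.1, 0) + (0, v.2) := by
  refine Prod.ext ?_ ?_ <;> simp

lemma decomp₁ {γ δ : ℕ} (u : Fin γ → ZMod 2) :
    ((u, 0) : Vec γ δ) = ∑ i, (u i).val • ((Pi.single i 1, 0) : Vec γ δ) := by
  rw [sum_nsmul_single₁]
  refine Prod.ext ?_ rfl
  funext i
  exact (z2_cast_val (u i)).symm

lemma decomp₂ {γ δ : ℕ} (a : Fin δ → ZMod 4) :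
    ((0, a) : Vec γ δ) = ∑ j, (a j).val • ((0, Pi.single j 1) : Vec γ δ) := by
  rw [sum_nsmul_single₂]
  refine Prod.ext rfl ?_
  funext j
  exact (z4_cast_val (a j)).symm

lemma range_Fhom : (Fhom fX fY fZ).range = AddSubgroup.closure (gens' fX fY fZ) := by
  apply le_antisymm
  · rintro v ⟨p, rfl⟩
    rw [Fhom_apply]
    refine AddSubgroup.add_mem _ (AddSubgroup.add_mem _ (AddSubgroup.add_mem _
      (AddSubgroup.add_mem _ ?_ ?_) ?_) ?_) ?_
    · -- rX part
      rw [vec_split p.1, map_add, map_add]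
      refine AddSubgroup.add_mem _ ?_ ?_
      · rw [show ((p.1.1, 0) : Vec γ' δ') = ∑ i, (p.1.1 i).val • (Pi.single i 1, 0) from
          decomp₁ _, map_sum, map_sum]
        exact AddSubgroup.sum_mem _ fun i _ => by
          rw [map_nsmul, map_nsmul]
          exact AddSubgroup.nsmul_mem _ (AddSubgroup.subset_closure (mem1 fX fY fZ i)) _
      · rw [show ((0, p.1.2) : Vec γ' δ') = ∑ j, (p.1.2 j).val • (0, Pi.single j 1) from
          decomp₂ _, map_sum, map_sum]
        exact AddSubgroup.sum_mem _ fun j _ => by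
          rw [map_nsmul, map_nsmul]
          exact AddSubgroup.nsmul_mem _ (AddSubgroup.subset_closure (mem2 fX fY fZ j)) _
    · exact AddSubgroup.sum_mem _ fun i _ =>
        AddSubgroup.nsmul_mem _ (AddSubgroup.subset_closure (mem3 fX fY fZ i)) _
    · exact AddSubgroup.sum_mem _ fun j _ =>
        AddSubgroup.nsmul_mem _ (AddSubgroup.subset_closure (mem4 fX fY fZ j)) _
    · rw [show ((0, p.2.1.2.2) : Vec γ'' δ'') = ∑ j, (p.2.1.2.2 j).val • (0, Pi.single j 1) from
        decomp₂ _, map_sum, map_sum]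
      exact AddSubgroup.sum_mem _ fun j _ => by
        rw [map_nsmul, map_nsmul]
        exact AddSubgroup.nsmul_mem _ (AddSubgroup.subset_closure (mem5 fX fY fZ j)) _
    · rw [vec_split p.2.2, map_add, map_add]
      refine AddSubgroup.add_mem _ ?_ ?_
      · rw [show ((p.2.2.1, 0) : Vec γ''' δ''') = ∑ i, (p.2.2.1 i).val • (Pi.single i 1, 0) from
          decomp₁ _, map_sum, map_sum]
        exact AddSubgroup.sum_mem _ fun i _ => by
          rw [map_nsmul, map_nsmul]
          exact AddSubgroup.nsmul_mem _ (AddSubgroup.subset_closure (mem6 fX fY fZ i)) _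
      · rw [show ((0, p.2.2.2) : Vec γ''' δ''') = ∑ j, (p.2.2.2 j).val • (0, Pi.single j 1) from
          decomp₂ _, map_sum, map_sum]
        exact AddSubgroup.sum_mem _ fun j _ => by
          rw [map_nsmul, map_nsmul]
          exact AddSubgroup.nsmul_mem _ (AddSubgroup.subset_closure (mem7 fX fY fZ j)) _
  · rw [AddSubgroup.closure_le]
    rintro v ((((((⟨i, rfl⟩ | ⟨j, rfl⟩) | ⟨i, rfl⟩) | ⟨j, rfl⟩) | ⟨j, rfl⟩) | ⟨i, rfl⟩) | ⟨j, rfl⟩)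
    · refine ⟨((Pi.single i 1, 0), ((0, (0, 0)), 0)), ?_⟩
      rw [Fhom_apply]
      simp [map_zero, ZMod.val_zero, Prod.mk_zero_zero]
    · refine ⟨((0, Pi.single j 1), ((0, (0, 0)), 0)), ?_⟩
      rw [Fhom_apply]
      simp [map_zero, ZMod.val_zero, Prod.mk_zero_zero]
    · refine ⟨(0, ((Pi.single i 1, (0, 0)), 0)), ?_⟩
      rw [Fhom_apply]
      have : (∑ i', ((Pi.single i 1 : Fin γ'' → ZMod 4) i').val •
          rY2 (ψ fY (Pi.single i' 1, 0))) = rY2 (ψ fY (Pi.single i 1, 0)) := by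
        rw [Finset.sum_eq_single i]
        · rw [Pi.single_eq_same, z4_val_one, one_smul]
        · intro i' _ hne
          rw [Pi.single_eq_of_ne hne]
          simp
        · simp
      rw [this]
      simp [map_zero, ZMod.val_zero, Prod.mk_zero_zero]
    · refine ⟨(0, ((0, (Pi.single j 1, 0)), 0)), ?_⟩
      rw [Fhom_apply]
      have : (∑ j', ((Pi.single j 1 : Fin δ'' → ZMod 4) j').val •
          rY4a (ψ fY (0, Pi.single j' 1))) = rY4a (ψ fY (0, Pi.single j 1)) := by
        rw [Finset.sum_eq_single j]
        · rw [Pi.single_eq_same, z4_val_one, one_smul]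
        · intro j' _ hne
          rw [Pi.single_eq_of_ne hne]
          simp
        · simp
      rw [this]
      simp [map_zero, ZMod.val_zero, Prod.mk_zero_zero]
    · refine ⟨(0, ((0, (0, Pi.single j 1)), 0)), ?_⟩
      rw [Fhom_apply]
      simp [map_zero, ZMod.val_zero, Prod.mk_zero_zero]
    · refine ⟨(0, ((0, (0, 0)), (Pi.single i 1, 0))), ?_⟩
      rw [Fhom_apply]
      simp [map_zero, ZMod.val_zero, Prod.mk_zero_zero]
    · refine ⟨(0, ((0, (0, 0)), (0, Pi.single j 1))), ?_⟩
      rw [Fhom_apply]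
      simp [map_zero, ZMod.val_zero, Prod.mk_zero_zero]

end BAaux

namespace BAaux

variable {α β γ' δ' γ'' δ'' γ''' δ''' : ℕ} {X Y Z : AddSubgroup (Vec α β)}
variable (fX : Vec γ' δ' ≃+ X) (fY : Vec γ'' δ'' ≃+ Y) (fZ : Vec γ''' δ''' ≃+ Z)

lemma Fhom_inj : Function.Injective (Fhom fX fY fZ) := by
  rw [injective_iff_map_eq_zero]
  rintro ⟨x1, ⟨⟨b, c, d⟩, zw⟩⟩ hp
  rw [Fhom_apply] at hp
  simp only [rXhom_apply, rY4bhom_apply, rZhom_apply] at hp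
  -- component extraction
  have E1 := congrArg (fun v : EVec α β => v.1.1) hp
  have E2 := congrArg (fun v : EVec α β => v.1.2) hp
  have E3 := congrArg (fun v : EVec α β => v.2.1) hp
  have E4 := congrArg (fun v : EVec α β => v.2.2.1) hp
  have E5 := congrArg (fun v : EVec α β => v.2.2.2.1) hp
  have E6 := congrArg (fun v : EVec α β => v.2.2.2.2.1) hp
  have E7 := congrArg (fun v : EVec α β => v.2.2.2.2.2) hp
  simp only [rX, rY2, rY4a, rY4b, rZ, Prod.fst_add, Prod.snd_add, Prod.fst_sum, Prod.snd_sum,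
    Prod.smul_fst, Prod.smul_snd, Prod.fst_zero, Prod.snd_zero, smul_zero,
    Finset.sum_const_zero, add_zero, zero_add] at E1 E2 E3 E4 E5 E6 E7
  -- order two facts for Y generators of the first kind
  have h2y2 : ∀ i : Fin γ'',
      (2 : ℕ) • ψ fY ((Pi.single i 1 : Fin γ'' → ZMod 2), (0 : Fin δ'' → ZMod 4)) = 0 := by
    intro i
    have h0 : (2 : ℕ) • ((Pi.single i 1, 0) : Vec γ'' δ'') = 0 := by
      refine Prod.ext ?_ ?_ <;> funext k <;>
        simp only [Prod.smul_fst, Prod.smul_snd, Pi.smul_apply, Prod.fst_zero, Prod.snd_zero,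
          Pi.zero_apply, z2_2smul, smul_zero]
    rw [← map_nsmul, h0, map_zero]
  have h2q : ∀ (i : Fin γ'') (k : Fin β),
      (2 : ℕ) • (ψ fY ((Pi.single i 1 : Fin γ'' → ZMod 2), (0 : Fin δ'' → ZMod 4))).2 k = 0 := by
    intro i k
    have := congrArg (fun v : Vec α β => v.2 k) (h2y2 i)
    simpa only [Prod.smul_snd, Pi.smul_apply, Prod.snd_zero, Pi.zero_apply] using this
  have hW2b : ∀ i : Fin γ'',
      ((2 : ℕ) • (half4 ∘ (ψ fY ((Pi.single i 1 : Fin γ'' → ZMod 2), (0 : Fin δ'' → ZMod 4))).2))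
        = (ψ fY ((Pi.single i 1 : Fin γ'' → ZMod 2), (0 : Fin δ'' → ZMod 4))).2 := by
    intro i
    funext k
    have := half4_two_smul _ (h2q i k)
    simpa only [Pi.smul_apply, Function.comp_apply] using this
  simp only [hW2b] at E5
  -- sum lemmas
  have hsum1 : ∀ (g : Fin γ'' → ℕ),
      (∑ i, g i • ψ fY ((Pi.single i 1 : Fin γ'' → ZMod 2), (0 : Fin δ'' → ZMod 4)))
        = ψ fY ((fun i => ((g i : ℕ) : ZMod 2)), 0) := by
    intro g
    calc (∑ i, g i • ψ fY ((Pi.single i 1 : Fin γ'' → ZMod 2), (0 : Fin δ'' → ZMod 4)))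
        = ∑ i, ψ fY (g i • ((Pi.single i 1 : Fin γ'' → ZMod 2), (0 : Fin δ'' → ZMod 4))) := by
          refine Finset.sum_congr rfl fun i _ => (map_nsmul (ψ fY) _ _).symm
      _ = ψ fY (∑ i, g i • ((Pi.single i 1 : Fin γ'' → ZMod 2), (0 : Fin δ'' → ZMod 4))) :=
          (map_sum (ψ fY) _ _).symm
      _ = _ := by rw [sum_nsmul_single₁]
  have hsum2 : ∀ (g : Fin δ'' → ℕ),
      (∑ j, g j • ψ fY ((0 : Fin γ'' → ZMod 2), Pi.single j 1))
        = ψ fY (0, (fun j => ((g j : ℕ) : ZMod 4))) := by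
    intro g
    calc (∑ j, g j • ψ fY ((0 : Fin γ'' → ZMod 2), Pi.single j 1))
        = ∑ j, ψ fY (g j • ((0 : Fin γ'' → ZMod 2), Pi.single j 1)) := by
          refine Finset.sum_congr rfl fun j _ => (map_nsmul (ψ fY) _ _).symm
      _ = ψ fY (∑ j, g j • ((0 : Fin γ'' → ZMod 2), Pi.single j 1)) :=
          (map_sum (ψ fY) _ _).symm
      _ = _ := by rw [sum_nsmul_single₂]
  have hyb1 : (∑ i, (b i).val • (ψ fY ((Pi.single i 1 : Fin γ'' → ZMod 2), (0 : Fin δ'' → ZMod 4))).1)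
      = (ψ fY ((fun i => (((b i).val : ℕ) : ZMod 2)), 0)).1 := by
    have := congrArg Prod.fst (hsum1 (fun i => (b i).val))
    simpa only [Prod.fst_sum, Prod.smul_fst] using this
  have hyb2 : (∑ i, (b i).val • (ψ fY ((Pi.single i 1 : Fin γ'' → ZMod 2), (0 : Fin δ'' → ZMod 4))).2)
      = (ψ fY ((fun i => (((b i).val : ℕ) : ZMod 2)), 0)).2 := by
    have := congrArg Prod.snd (hsum1 (fun i => (b i).val))
    simpa only [Prod.snd_sum, Prod.smul_snd] using this
  have hcc : (fun j => (((c j).val : ℕ) : ZMod 4)) = c := funext fun j => z4_cast_val _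
  have hyc1 : (∑ j, (c j).val • (ψ fY ((0 : Fin γ'' → ZMod 2), Pi.single j 1)).1)
      = (ψ fY (0, c)).1 := by
    have := congrArg Prod.fst (hsum2 (fun j => (c j).val))
    rw [hcc] at this
    simpa only [Prod.fst_sum, Prod.smul_fst] using this
  have hyc2 : (∑ j, (c j).val • (ψ fY ((0 : Fin γ'' → ZMod 2), Pi.single j 1)).2)
      = (ψ fY (0, c)).2 := by
    have := congrArg Prod.snd (hsum2 (fun j => (c j).val))
    rw [hcc] at this
    simpa only [Prod.snd_sum, Prod.smul_snd] using this
  -- mod 2 reduction of E3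
  have E3' : (∑ i, (b i).val • (ψ fY ((Pi.single i 1 : Fin γ'' → ZMod 2), (0 : Fin δ'' → ZMod 4))).1)
      + (∑ j, (c j).val • (ψ fY ((0 : Fin γ'' → ZMod 2), Pi.single j 1)).1) = 0 := by
    have h := congrArg (piRed2 α) E3
    rw [map_add, map_add, map_zero, map_sum, map_sum] at h
    have hA : piRed2 α (fun k => dbl ((ψ fX x1).1 k)) = 0 := funext fun k => red2_dbl _
    have hB : ∀ i : Fin γ'', piRed2 α ((b i).val • fun k =>
        i24 ((ψ fY ((Pi.single i 1 : Fin γ'' → ZMod 2), (0 : Fin δ'' → ZMod 4))).1 k))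
        = (b i).val • (ψ fY ((Pi.single i 1 : Fin γ'' → ZMod 2), (0 : Fin δ'' → ZMod 4))).1 := by
      intro i
      rw [map_nsmul]
      congr 1
      exact funext fun k => red2_i24 _
    have hC : ∀ j : Fin δ'', piRed2 α ((c j).val • fun k =>
        i24 ((ψ fY ((0 : Fin γ'' → ZMod 2), Pi.single j 1)).1 k))
        = (c j).val • (ψ fY ((0 : Fin γ'' → ZMod 2), Pi.single j 1)).1 := by
      intro j
      rw [map_nsmul]
      congr 1
      exact funext fun k => red2_i24 _
    rw [hA, zero_add] at h
    rw [Finset.sum_congr rfl fun i _ => hB i, Finset.sum_congr rfl fun j _ => hC j] at h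
    exact h
  -- fY (bbar, c) = 0
  rw [hyb1, hyc1] at E3'
  rw [hyb2, hyc2, E4, zero_add] at E5
  have hybc : ψ fY ((fun i => (((b i).val : ℕ) : ZMod 2)), c) = 0 := by
    have hsplit : (((fun i => (((b i).val : ℕ) : ZMod 2)), c) : Vec γ'' δ'')
        = ((fun i => (((b i).val : ℕ) : ZMod 2)), 0) + (0, c) := by
      refine Prod.ext ?_ ?_ <;> simp
    rw [hsplit, map_add]
    refine Prod.ext ?_ ?_
    · rw [Prod.fst_add]; exact E3'
    · rw [Prod.snd_add]; exact E5
  have hbc0 : (((fun i => (((b i).val : ℕ) : ZMod 2)), c) : Vec γ'' δ'') = 0 :=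
    ψ_inj fY (by rw [hybc, map_zero])
  have hbbar : (fun i => (((b i).val : ℕ) : ZMod 2)) = (0 : Fin γ'' → ZMod 2) :=
    congrArg Prod.fst hbc0
  have hc : c = 0 := congrArg Prod.snd hbc0
  subst hc
  simp only [Pi.zero_apply, ZMod.val_zero, zero_smul, Finset.sum_const_zero, add_zero,
    zero_add] at E2 E3 E6 E7
  -- b has order two entries
  have hb2 : ∀ i, (2 : ℕ) • b i = 0 := fun i => red2_zero_order _ (congrFun hbbar i)
  have hval : ∀ i, (b i).val = 2 * (half2 (b i)).val := fun i => val_order2 _ (hb2 i)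
  have htψ : (∑ i, (half2 (b i)).val • ψ fY ((Pi.single i 1 : Fin γ'' → ZMod 2), (0 : Fin δ'' → ZMod 4)))
      = ψ fY ((fun i => half2 (b i)), 0) := by
    rw [hsum1 (fun i => (half2 (b i)).val)]
    congr 1
    refine Prod.ext ?_ rfl
    exact funext fun i => z2_cast_val _
  have ht1 : ∀ k, (∑ i, (half2 (b i)).val •
      (ψ fY ((Pi.single i 1 : Fin γ'' → ZMod 2), (0 : Fin δ'' → ZMod 4))).1 k)
      = (ψ fY ((fun i => half2 (b i)), 0)).1 k := by
    intro k
    have := congrArg (fun v : Vec α β => v.1 k) htψ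
    simpa only [Prod.fst_sum, Prod.smul_fst, Finset.sum_apply, Pi.smul_apply] using this
  have ht2 : ∀ k, (∑ i, (half2 (b i)).val •
      (ψ fY ((Pi.single i 1 : Fin γ'' → ZMod 2), (0 : Fin δ'' → ZMod 4))).2 k)
      = (ψ fY ((fun i => half2 (b i)), 0)).2 k := by
    intro k
    have := congrArg (fun v : Vec α β => v.2 k) htψ
    simpa only [Prod.snd_sum, Prod.smul_snd, Finset.sum_apply, Pi.smul_apply] using this
  -- Sb rewriting
  have hSb : (∑ i, (b i).val • fun k =>
      i24 ((ψ fY ((Pi.single i 1 : Fin γ'' → ZMod 2), (0 : Fin δ'' → ZMod 4))).1 k))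
      = (fun k => dbl ((ψ fY ((fun i => half2 (b i)), 0)).1 k)) := by
    funext k
    rw [Finset.sum_apply]
    have hterm : ∀ i : Fin γ'', ((b i).val • fun k' =>
        i24 ((ψ fY ((Pi.single i 1 : Fin γ'' → ZMod 2), (0 : Fin δ'' → ZMod 4))).1 k')) k
        = dblHom ((half2 (b i)).val •
            (ψ fY ((Pi.single i 1 : Fin γ'' → ZMod 2), (0 : Fin δ'' → ZMod 4))).1 k) := by
      intro i
      rw [Pi.smul_apply]
      rw [hval i, mul_comm, mul_smul, two_i24, map_nsmul]
      rfl
    rw [Finset.sum_congr rfl fun i _ => hterm i, ← map_sum, ht1 k]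
    rfl
  -- Hsum rewriting
  have hHs : (∑ i, (b i).val •
      (half4 ∘ (ψ fY ((Pi.single i 1 : Fin γ'' → ZMod 2), (0 : Fin δ'' → ZMod 4))).2))
      = (ψ fY ((fun i => half2 (b i)), 0)).2 := by
    funext k
    rw [Finset.sum_apply]
    have hterm : ∀ i : Fin γ'', ((b i).val •
        (half4 ∘ (ψ fY ((Pi.single i 1 : Fin γ'' → ZMod 2), (0 : Fin δ'' → ZMod 4))).2)) k
        = (half2 (b i)).val •
            (ψ fY ((Pi.single i 1 : Fin γ'' → ZMod 2), (0 : Fin δ'' → ZMod 4))).2 k := by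
      intro i
      rw [Pi.smul_apply, Function.comp_apply, hval i, mul_comm, mul_smul,
        half4_two_smul _ (h2q i k)]
    rw [Finset.sum_congr rfl fun i _ => hterm i, ht2 k]
  have hHs3 : (∑ i, (b i).val • ((3 : ℕ) •
      (half4 ∘ (ψ fY ((Pi.single i 1 : Fin γ'' → ZMod 2), (0 : Fin δ'' → ZMod 4))).2)))
      = (3 : ℕ) • (ψ fY ((fun i => half2 (b i)), 0)).2 := by
    rw [show (∑ i, (b i).val • ((3 : ℕ) •
        (half4 ∘ (ψ fY ((Pi.single i 1 : Fin γ'' → ZMod 2), (0 : Fin δ'' → ZMod 4))).2)))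
        = ∑ i, (3 : ℕ) • ((b i).val •
        (half4 ∘ (ψ fY ((Pi.single i 1 : Fin γ'' → ZMod 2), (0 : Fin δ'' → ZMod 4))).2)) from
      Finset.sum_congr rfl fun i _ => smul_comm _ _ _]
    rw [← Finset.smul_sum, hHs]
  -- 2 • tvec = 0
  have h2t : (2 : ℕ) • ψ fY (((fun i => half2 (b i)) : Fin γ'' → ZMod 2), (0 : Fin δ'' → ZMod 4)) = 0 := by
    have h0 : (2 : ℕ) • (((fun i => half2 (b i)), 0) : Vec γ'' δ'') = 0 := by
      refine Prod.ext ?_ ?_ <;> funext k <;>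
        simp only [Prod.smul_fst, Prod.smul_snd, Pi.smul_apply, Prod.fst_zero, Prod.snd_zero,
          Pi.zero_apply, z2_2smul, smul_zero]
    rw [← map_nsmul, h0, map_zero]
  have h2t2 : (2 : ℕ) • (ψ fY (((fun i => half2 (b i)) : Fin γ'' → ZMod 2), (0 : Fin δ'' → ZMod 4))).2 = 0 := by
    have := congrArg Prod.snd h2t
    simpa only [Prod.smul_snd, Prod.snd_zero] using this
  have h3t2 : (3 : ℕ) • (ψ fY (((fun i => half2 (b i)) : Fin γ'' → ZMod 2), (0 : Fin δ'' → ZMod 4))).2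
      = (ψ fY (((fun i => half2 (b i)) : Fin γ'' → ZMod 2), (0 : Fin δ'' → ZMod 4))).2 := by
    have h32 : (3 : ℕ) = 2 + 1 := by norm_num
    rw [h32, add_nsmul, h2t2, one_nsmul, zero_add]
  -- x.1 = t.1
  rw [hSb] at E3
  have hx1 : (ψ fX x1).1 = (ψ fY ((fun i => half2 (b i)), 0)).1 := by
    funext k
    have hk := congrFun E3 k
    simp only [Pi.add_apply, Pi.zero_apply] at hk
    exact dbl_add_eq_zero _ _ hk
  -- E6 final
  rw [hHs, E4, zero_add] at E6
  -- z.2 = 0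
  rw [hHs3, h3t2, E4, zero_add] at E7
  have hz2 : (ψ fZ zw).2 = 0 := by
    rw [E6, zero_add] at E7
    exact E7
  -- z.1 = 0
  rw [hyb1, hbbar] at E2
  have hψ00 : (ψ fY (((0 : Fin γ'' → ZMod 2), (0 : Fin δ'' → ZMod 4)) : Vec γ'' δ'')).1 = 0 := by
    rw [Prod.mk_zero_zero, map_zero, Prod.fst_zero]
  rw [hψ00, add_zero] at E2
  have hz1 : (ψ fZ zw).1 = 0 := by
    rw [E1, zero_add] at E2
    exact E2
  have hzw : zw = 0 := by
    apply ψ_inj fZ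
    rw [map_zero]
    exact Prod.ext hz1 hz2
  -- t + yd = 0
  have htd : ψ fY ((fun i => half2 (b i)), d) = 0 := by
    have hsplit : (((fun i => half2 (b i)), d) : Vec γ'' δ'')
        = ((fun i => half2 (b i)), 0) + (0, d) := by
      refine Prod.ext ?_ ?_ <;> simp
    rw [hsplit, map_add]
    refine Prod.ext ?_ ?_
    · rw [Prod.fst_add, ← hx1]
      exact E1
    · rw [Prod.snd_add]
      exact E6
  have hbd : (((fun i => half2 (b i)), d) : Vec γ'' δ'') = 0 :=
    ψ_inj fY (by rw [htd, map_zero])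
  have hbp : (fun i => half2 (b i)) = (0 : Fin γ'' → ZMod 2) := congrArg Prod.fst hbd
  have hd : d = 0 := congrArg Prod.snd hbd
  have hb : b = 0 := funext fun i => half2_zero _ (hb2 i) (congrFun hbp i)
  have hx : x1 = 0 := by
    apply ψ_inj fX
    rw [map_zero]
    refine Prod.ext ?_ E4
    rw [hx1, hbp, Prod.mk_zero_zero, map_zero, Prod.fst_zero]
  exact Prod.ext hx (Prod.ext (Prod.ext hb (Prod.ext rfl hd)) hzw)

end BAaux

namespace BAaux

def shuf {A1 A2 B1 B2 B3 C1 C2 : Type*} [AddCommMonoid A1] [AddCommMonoid A2] [AddCommMonoid B1]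
    [AddCommMonoid B2] [AddCommMonoid B3] [AddCommMonoid C1] [AddCommMonoid C2] :
    ((A1 × A2) × ((B1 × (B2 × B3)) × (C1 × C2))) ≃+
      ((A1 × C1) × (A2 × (B1 × (B2 × (B3 × C2))))) where
  toFun p := ((p.1.1, p.2.2.1), (p.1.2, (p.2.1.1, (p.2.1.2.1, (p.2.1.2.2, p.2.2.2)))))
  invFun q := ((q.1.1, q.2.1), ((q.2.2.1, (q.2.2.2.1, q.2.2.2.2.1)), (q.1.2, q.2.2.2.2.2)))
  left_inv _ := rfl
  right_inv _ := rfl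
  map_add' _ _ := rfl

def vecCast (a : ℕ) {m n : ℕ} (h : m = n) : Vec a m ≃+ Vec a n := by
  subst h; exact AddEquiv.refl _

variable {α β γ' δ' γ'' δ'' γ''' δ''' : ℕ} {X Y Z : AddSubgroup (Vec α β)}
variable (fX : Vec γ' δ' ≃+ X) (fY : Vec γ'' δ'' ≃+ Y) (fZ : Vec γ''' δ''' ≃+ Z)

def finalEquiv : DVec γ' δ' γ'' δ'' γ''' δ''' ≃+
    Vec (γ' + γ''') (δ' + γ'' + 2 * δ'' + δ''') :=
  (shuf.trans ((appendAddEquiv γ' γ''' (ZMod 2)).prodCongr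
    (app5 δ' γ'' δ'' δ'' δ''' (ZMod 4)))).trans (vecCast _ (by ring))


end BAaux

/-- the BA-Plotkin construction applied to codes `X, Y, Z` of types
`(α,β;γ',δ')`, `(α,β;γ'',δ'')`, `(α,β;γ''',δ''')` yields a code of type
`(2α, α+4β; γ'+γ''', δ'+γ''+2δ''+δ''')`; in particular its cardinality is
`2^(γ'+γ''')·4^(δ'+γ''+2δ''+δ''')` and its binary length is `4α+8β`. -/
theorem baPlotkin_type (α β γ' δ' γ'' δ'' γ''' δ''' : ℕ)
    (X Y Z : AddSubgroup (Vec α β))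
    (fX : Vec γ' δ' ≃+ X) (fY : Vec γ'' δ'' ≃+ Y) (fZ : Vec γ''' δ''' ≃+ Z) :
    let C : AddSubgroup (BAVec α β) := AddSubgroup.closure (baGens fX fY fZ)
    Nonempty (C ≃+ Vec (γ' + γ''') (δ' + γ'' + 2 * δ'' + δ''')) ∧
      Nat.card C = 2 ^ (γ' + γ''') * 4 ^ (δ' + γ'' + 2 * δ'' + δ''') ∧
      (α + α) + 2 * (α + (β + (β + (β + β)))) = 4 * α + 8 * β := by
  intro C
  have hgens : baGens fX fY fZ = ⇑(BAaux.eBA α β) '' BAaux.gens' fX fY fZ := by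
    unfold baGens BAaux.gens'
    rw [Set.image_union, Set.image_union, Set.image_union, Set.image_union, Set.image_union,
      Set.image_union, ← Set.range_comp, ← Set.range_comp, ← Set.range_comp, ← Set.range_comp,
      ← Set.range_comp, ← Set.range_comp, ← Set.range_comp]
    rfl
  have hC : C = AddSubgroup.map (BAaux.eBA α β).toAddMonoidHom ((BAaux.Fhom fX fY fZ).range) := by
    show AddSubgroup.closure (baGens fX fY fZ) = _
    rw [hgens, BAaux.range_Fhom, AddMonoidHom.map_closure, AddEquiv.coe_toAddMonoidHom]
  have e1 := AddMonoidHom.ofInjective (BAaux.Fhom_inj fX fY fZ)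
  have e2 := AddSubgroup.equivMapOfInjective ((BAaux.Fhom fX fY fZ).range)
    (BAaux.eBA α β).toAddMonoidHom (BAaux.eBA α β).injective
  have efin : ↥(AddSubgroup.map (BAaux.eBA α β).toAddMonoidHom ((BAaux.Fhom fX fY fZ).range)) ≃+
      Vec (γ' + γ''') (δ' + γ'' + 2 * δ'' + δ''') :=
    e2.symm.trans (e1.symm.trans BAaux.finalEquiv)
  refine ⟨⟨hC ▸ efin⟩, ?_, by ring⟩
  rw [hC, Nat.card_congr efin.toEquiv, Nat.card_prod, Nat.card_fun, Nat.card_fun, Nat.card_zmod,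
    Nat.card_zmod, Nat.card_eq_fintype_card, Nat.card_eq_fintype_card, Fintype.card_fin,
    Fintype.card_fin]
end
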